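/- For real d×d positive semidefinite matrices A and B, the squared Bures distance satisfies d_B²(A,B) = 0 if and only if A = B. -/

import Mathlib

open MeasureTheory ProbabilityTheory Matrix
open scoped Classical

/-- The unique positive semidefinite square root of a positive semidefinite real matrix
(junk value `0` if the matrix is not positive semidefinite). -/
noncomputable def psdSqrt {d : ℕ} (M : Matrix (Fin d) (Fin d) ℝ) : Matrix (Fin d) (Fin d) ℝ :=
  if h : M.PosSemidef then
    h.1.eigenvectorUnitary.1 * diagonal ((↑) ∘ (fun x => Real.sqrt x) ∘ h.1.eigenvalues) *
      (star h.1.eigenvectorUnitary : Matrix (Fin d) (Fin d) ℝ)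
  else 0

/-- The squared Bures distance `Tr[A + B − 2 (A^{1/2} B A^{1/2})^{1/2}]`. -/
noncomputable def buresSq {d : ℕ} (A B : Matrix (Fin d) (Fin d) ℝ) : ℝ :=
  (A + B - 2 • psdSqrt (psdSqrt A * B * psdSqrt A)).trace

section
open scoped MatrixOrder

lemma psdSqrt_eq_cfc {d : ℕ} {M : Matrix (Fin d) (Fin d) ℝ} (h : M.PosSemidef) :
    psdSqrt M = CFC.sqrt M := by
  rw [CFC.sqrt_eq_real_sqrt M h.nonneg, cfcₙ_eq_cfc, h.1.cfc_eq, IsHermitian.cfc,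
    Unitary.conjStarAlgAut_apply, psdSqrt, dif_pos h]
  rfl

lemma psdSqrt_posSemidef {d : ℕ} {M : Matrix (Fin d) (Fin d) ℝ} (h : M.PosSemidef) :
    (psdSqrt M).PosSemidef := by
  rw [psdSqrt_eq_cfc h]; exact (CFC.sqrt_nonneg M).posSemidef

lemma psdSqrt_mul_self {d : ℕ} {M : Matrix (Fin d) (Fin d) ℝ} (h : M.PosSemidef) :
    psdSqrt M * psdSqrt M = M := by
  rw [psdSqrt_eq_cfc h]; exact CFC.sqrt_mul_sqrt_self M h.nonneg

lemma psdSqrt_of_sq {d : ℕ} {A M : Matrix (Fin d) (Fin d) ℝ} (hA : A.PosSemidef)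
    (hM : M.PosSemidef) (h : A * A = M) : psdSqrt M = A := by
  rw [psdSqrt_eq_cfc hM]
  exact CFC.sqrt_unique h hA.nonneg

end

lemma trace_gram_eq {d : ℕ} (G : Matrix (Fin d) (Fin d) ℝ) :
    (Gᴴ * G).trace = ∑ i, ∑ j, G j i * G j i := by
  simp [Matrix.trace, Matrix.diag, Matrix.mul_apply, Matrix.conjTranspose_apply]

lemma trace_gram_nonneg {d : ℕ} (G : Matrix (Fin d) (Fin d) ℝ) : 0 ≤ (Gᴴ * G).trace := by
  rw [trace_gram_eq]
  exact Finset.sum_nonneg fun i _ => Finset.sum_nonneg fun j _ => mul_self_nonneg _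

lemma eq_zero_of_trace_gram {d : ℕ} (G : Matrix (Fin d) (Fin d) ℝ)
    (h : (Gᴴ * G).trace = 0) : G = 0 := by
  rw [trace_gram_eq] at h
  ext j i
  have h1 := (Finset.sum_eq_zero_iff_of_nonneg
    (fun i _ => Finset.sum_nonneg fun j _ => mul_self_nonneg (G j i))).mp h i (Finset.mem_univ i)
  have h2 := (Finset.sum_eq_zero_iff_of_nonneg
    (fun j _ => mul_self_nonneg (G j i))).mp h1 j (Finset.mem_univ j)
  simpa using mul_self_eq_zero.mp h2

/-- for PSD matrices `A, B`, `d_B²(A,B) = 0 ↔ A = B`. -/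
theorem stmt3 (d : ℕ) (A B : Matrix (Fin d) (Fin d) ℝ)
    (hA : A.PosSemidef) (hB : B.PosSemidef) :
    buresSq A B = 0 ↔ A = B := by
  obtain ⟨C, hCdef⟩ : ∃ C, C = psdSqrt A := ⟨_, rfl⟩
  obtain ⟨R, hRdef⟩ : ∃ R, R = psdSqrt B := ⟨_, rfl⟩
  have hCps : C.PosSemidef := hCdef ▸ psdSqrt_posSemidef hA
  have hRps : R.PosSemidef := hRdef ▸ psdSqrt_posSemidef hB
  have hCh : Cᴴ = C := hCps.1
  have hRh : Rᴴ = R := hRps.1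
  have hCC : C * C = A := by rw [hCdef]; exact psdSqrt_mul_self hA
  have hRR : R * R = B := by rw [hRdef]; exact psdSqrt_mul_self hB
  have hMeq : (R * C)ᴴ * (R * C) = C * B * C := by
    rw [conjTranspose_mul, hCh, hRh, ← hRR]
    noncomm_ring
  have hM : (C * B * C).PosSemidef := hMeq ▸ posSemidef_conjTranspose_mul_self (R * C)
  obtain ⟨S, hSdef⟩ : ∃ S, S = psdSqrt (C * B * C) := ⟨_, rfl⟩
  have hSps : S.PosSemidef := hSdef ▸ psdSqrt_posSemidef hM
  have hSh : Sᴴ = S := hSps.1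
  have hSS : S * S = (R * C)ᴴ * (R * C) := by
    rw [hMeq, hSdef]; exact psdSqrt_mul_self hM
  have hbures : buresSq A B = A.trace + B.trace - 2 * S.trace := by
    unfold buresSq
    rw [← hCdef, ← hSdef, Matrix.trace_sub, Matrix.trace_add, Matrix.trace_smul]
    simp [nsmul_eq_mul]
  constructor
  · intro h0
    -- spectral decomposition of S
    have hS1 : S.IsHermitian := hSps.1
    obtain ⟨μ, hμdef⟩ : ∃ μ, μ = hS1.eigenvalues := ⟨_, rfl⟩
    have hμ0 : ∀ i, 0 ≤ μ i := by rw [hμdef]; exact fun i => hSps.eigenvalues_nonneg i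
    obtain ⟨V, hVdef⟩ : ∃ V, V = (hS1.eigenvectorUnitary : Matrix (Fin d) (Fin d) ℝ) := ⟨_, rfl⟩
    have hVmem : V ∈ Matrix.unitaryGroup (Fin d) ℝ := hVdef ▸ hS1.eigenvectorUnitary.2
    have hVV : Vᴴ * V = 1 := by
      have := Matrix.mem_unitaryGroup_iff'.mp hVmem
      rwa [Matrix.star_eq_conjTranspose] at this
    have hVV' : V * Vᴴ = 1 := by
      have := Matrix.mem_unitaryGroup_iff.mp hVmem
      rwa [Matrix.star_eq_conjTranspose] at this
    have hspec : S = V * diagonal μ * Vᴴ := by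
      have := hS1.spectral_theorem
      rw [Unitary.conjStarAlgAut_apply, ← hVdef, ← hμdef] at this
      simpa [RCLike.ofReal_real_eq_id, Matrix.star_eq_conjTranspose] using this
    have hSV : S * V = V * diagonal μ := by
      rw [hspec, Matrix.mul_assoc (V * diagonal μ), hVV, Matrix.mul_one]
    have hTrS : S.trace = ∑ i, μ i := by
      calc S.trace = (V * diagonal μ * Vᴴ).trace := by rw [← hspec]
      _ = (Vᴴ * (V * diagonal μ)).trace := by rw [Matrix.trace_mul_comm]
      _ = ((Vᴴ * V) * diagonal μ).trace := by rw [Matrix.mul_assoc]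
      _ = ∑ i, μ i := by rw [hVV, Matrix.one_mul, Matrix.trace_diagonal]
    obtain ⟨X, hXdef⟩ : ∃ X, X = R * C := ⟨_, rfl⟩
    have hXh : Xᴴ = C * R := by rw [hXdef, conjTranspose_mul, hCh, hRh]
    have hXX : Xᴴ * X = S * S := by rw [hXdef, ← hSS]
    obtain ⟨E, hEdef⟩ : ∃ E, E = diagonal (fun i => (μ i)⁻¹) := ⟨_, rfl⟩
    have hEh : Eᴴ = E := by
      rw [hEdef, Matrix.diagonal_conjTranspose]
      congr 1
    obtain ⟨W, hWdef⟩ : ∃ W, W = X * (V * E) := ⟨_, rfl⟩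
    have hWh : Wᴴ = E * (Vᴴ * Xᴴ) := by
      rw [hWdef, Matrix.conjTranspose_mul, Matrix.conjTranspose_mul, hEh, Matrix.mul_assoc]
    have hXXV : Xᴴ * (X * V) = V * (diagonal μ * diagonal μ) := by
      calc Xᴴ * (X * V) = (Xᴴ * X) * V := by rw [Matrix.mul_assoc]
      _ = S * (S * V) := by rw [hXX, Matrix.mul_assoc]
      _ = S * (V * diagonal μ) := by rw [hSV]
      _ = (S * V) * diagonal μ := by rw [Matrix.mul_assoc]
      _ = (V * diagonal μ) * diagonal μ := by rw [hSV]
      _ = V * (diagonal μ * diagonal μ) := by rw [Matrix.mul_assoc]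
    have hWX : Wᴴ * (X * V) = diagonal μ := by
      calc Wᴴ * (X * V) = E * (Vᴴ * (Xᴴ * (X * V))) := by
            rw [hWh]; noncomm_ring
      _ = E * (Vᴴ * (V * (diagonal μ * diagonal μ))) := by rw [hXXV]
      _ = E * ((Vᴴ * V) * (diagonal μ * diagonal μ)) := by rw [Matrix.mul_assoc Vᴴ]
      _ = E * (diagonal μ * diagonal μ) := by rw [hVV, Matrix.one_mul]
      _ = diagonal μ := by
            rw [hEdef, Matrix.diagonal_mul_diagonal, Matrix.diagonal_mul_diagonal]
            refine congrArg diagonal (funext fun i => ?_)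
            rcases eq_or_ne (μ i) 0 with h | h
            · simp [h]
            · field_simp
    have hWW : Wᴴ * W = diagonal (fun i => if μ i = 0 then (0:ℝ) else 1) := by
      calc Wᴴ * W = (Wᴴ * (X * V)) * E := by rw [hWdef]; noncomm_ring
      _ = diagonal μ * E := by rw [hWX]
      _ = diagonal (fun i => if μ i = 0 then (0:ℝ) else 1) := by
            rw [hEdef, Matrix.diagonal_mul_diagonal]
            refine congrArg diagonal (funext fun i => ?_)
            rcases eq_or_ne (μ i) 0 with h | h
            · simp [h]
            · rw [mul_inv_cancel₀ h, if_neg h]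
    have hEf : E * diagonal (fun i => if μ i = 0 then (0:ℝ) else 1) = E := by
      rw [hEdef, Matrix.diagonal_mul_diagonal]
      refine congrArg diagonal (funext fun i => ?_)
      rcases eq_or_ne (μ i) 0 with h | h
      · simp [h]
      · simp [h]
    have hWf : W * diagonal (fun i => if μ i = 0 then (0:ℝ) else 1) = W := by
      calc W * diagonal (fun i => if μ i = 0 then (0:ℝ) else 1)
          = X * (V * (E * diagonal (fun i => if μ i = 0 then (0:ℝ) else 1))) := by
            rw [hWdef]; noncomm_ring
      _ = W := by rw [hEf, hWdef]
    obtain ⟨P, hPdef⟩ : ∃ P, P = W * Wᴴ := ⟨_, rfl⟩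
    have hPh : Pᴴ = P := by
      rw [hPdef, Matrix.conjTranspose_mul, Matrix.conjTranspose_conjTranspose]
    have hPP : P * P = P := by
      calc P * P = W * ((Wᴴ * W) * Wᴴ) := by rw [hPdef]; noncomm_ring
      _ = (W * diagonal (fun i => if μ i = 0 then (0:ℝ) else 1)) * Wᴴ := by
            rw [hWW]; noncomm_ring
      _ = P := by rw [hWf, hPdef]
    -- the two Gram matrices
    obtain ⟨G, hGdef⟩ : ∃ G, G = R - P * R := ⟨_, rfl⟩
    obtain ⟨H, hHdef⟩ : ∃ H, H = R * W - C * V := ⟨_, rfl⟩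
    have hRPR : (R * (P * R)).trace = (P * B).trace := by
      rw [Matrix.trace_mul_comm, Matrix.mul_assoc, hRR]
    have hGh : Gᴴ = R - R * P := by
      rw [hGdef, Matrix.conjTranspose_sub, Matrix.conjTranspose_mul, hPh, hRh]
    have hGG : Gᴴ * G = B - R * (P * R) := by
      calc Gᴴ * G = (R - R * P) * (R - P * R) := by rw [hGh, hGdef]
      _ = R * R - R * (P * R) - (R * (P * R) - R * (P * (P * R))) := by noncomm_ring
      _ = R * R - R * (P * R) := by
            rw [show P * (P * R) = P * R from by rw [← Matrix.mul_assoc, hPP]]; abel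
      _ = B - R * (P * R) := by rw [hRR]
    have hTrG : (Gᴴ * G).trace = B.trace - (P * B).trace := by
      rw [hGG, Matrix.trace_sub, hRPR]
    have hHh : Hᴴ = Wᴴ * R - Vᴴ * C := by
      rw [hHdef, Matrix.conjTranspose_sub, Matrix.conjTranspose_mul, Matrix.conjTranspose_mul,
        hRh, hCh]
    have p1 : (Wᴴ * R * (R * W)).trace = (P * B).trace := by
      rw [Matrix.trace_mul_comm]
      rw [show R * W * (Wᴴ * R) = R * (P * R) by rw [hPdef]; noncomm_ring]
      exact hRPR
    have p2 : (Wᴴ * R * (C * V)).trace = ∑ i, μ i := by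
      rw [show Wᴴ * R * (C * V) = Wᴴ * (X * V) by rw [hXdef]; noncomm_ring, hWX,
        Matrix.trace_diagonal]
    have p3 : (Vᴴ * C * (R * W)).trace = ∑ i, μ i := by
      have e : Vᴴ * C * (R * W) = (Wᴴ * (X * V))ᴴ := by
        rw [Matrix.conjTranspose_mul, Matrix.conjTranspose_mul,
          Matrix.conjTranspose_conjTranspose, hXh]
        noncomm_ring
      rw [e, hWX, Matrix.diagonal_conjTranspose, Matrix.trace_diagonal]
      simp
    have p4 : (Vᴴ * C * (C * V)).trace = A.trace := by
      rw [show Vᴴ * C * (C * V) = Vᴴ * (A * V) by rw [← hCC]; noncomm_ring,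
        Matrix.trace_mul_comm, Matrix.mul_assoc, hVV', Matrix.mul_one]
    have hHH : Hᴴ * H = Wᴴ * R * (R * W) - Wᴴ * R * (C * V) - Vᴴ * C * (R * W)
        + Vᴴ * C * (C * V) := by
      rw [hHh, hHdef]
      noncomm_ring
    have hTrH : (Hᴴ * H).trace = (P * B).trace + A.trace - 2 * ∑ i, μ i := by
      rw [hHH, Matrix.trace_add, Matrix.trace_sub, Matrix.trace_sub, p1, p2, p3, p4]
      ring
    have key : (Gᴴ * G).trace + (Hᴴ * H).trace = buresSq A B := by
      rw [hTrG, hTrH, hbures, hTrS]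
      ring
    have hG0 : G = 0 := by
      apply eq_zero_of_trace_gram
      have n1 := trace_gram_nonneg G
      have n2 := trace_gram_nonneg H
      rw [h0] at key
      linarith
    have hH0 : R * W = C * V := by
      have hz : H = 0 := by
        apply eq_zero_of_trace_gram
        have n1 := trace_gram_nonneg G
        have n2 := trace_gram_nonneg H
        rw [h0] at key
        linarith
      rw [hHdef] at hz
      exact sub_eq_zero.mp hz
    have hPR : P * R = R := by
      have h' := hGdef
      rw [hG0] at h'
      exact (sub_eq_zero.mp h'.symm).symm
    have hWR : Wᴴ * R = (R * W)ᴴ := by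
      rw [Matrix.conjTranspose_mul, hRh]
    have hfin : B = A := by
      calc B = R * R := hRR.symm
      _ = R * (P * R) := by rw [hPR]
      _ = (R * W) * (Wᴴ * R) := by rw [hPdef]; noncomm_ring
      _ = (C * V) * (C * V)ᴴ := by rw [hWR, hH0]
      _ = C * ((V * Vᴴ) * C) := by
            rw [Matrix.conjTranspose_mul, hCh]
            noncomm_ring
      _ = A := by rw [hVV', Matrix.one_mul, hCC]
    exact hfin.symm
  · rintro rfl
    have hsq' : A * A = C * A * C := by
      rw [← hCC]
      noncomm_ring
    have hPS : psdSqrt (C * A * C) = A := psdSqrt_of_sq hA hM hsq'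
    unfold buresSq
    rw [← hCdef, hPS]
    have hz : A + A - 2 • A = 0 := by
      rw [two_smul]; abel
    rw [hz, Matrix.trace_zero]
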